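/- For 0 ≤ q ≤ 2, every alternating function f : (S¹×S¹)^{q+1} → ℝ that is invariant under the twisted (orientation-sign) action of H = Isom(ℍ²×ℍ²) is identically zero. In particular, the twisted continuous bounded cohomology H^q_{c,b}(H, ℝ̃) vanishes for 0 ≤ q ≤ 2. -/

import Mathlib

open scoped BigOperators

/-- Orientation cocycle on the circle: +1 for positively oriented (counterclockwise)
triples of distinct points, -1 for negatively oriented triples, 0 if two coincide. -/
noncomputable def orient (a b c : Circle) : ℝ :=
  Real.sign (((starRingEnd ℂ) ((b : ℂ) - (a : ℂ)) * ((c : ℂ) - (a : ℂ))).im)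

/-- `x 0, …, x (n-1)` are positively cyclically ordered according to their numbering. -/
def PosCyclicallyOrdered {n : ℕ} (x : Fin n → Circle) : Prop :=
  ∀ i j k : Fin n, i < j → j < k → orient (x i) (x j) (x k) = 1

/-- Θ = Alt(Or₁ ∪ Or₂). -/
noncomputable def Theta (z : Fin 5 → Circle × Circle) : ℝ :=
  (1 / 120) * ∑ σ : Equiv.Perm (Fin 5),
    ((Equiv.Perm.sign σ : ℤ) : ℝ) *
      (orient (z (σ 0)).1 (z (σ 1)).1 (z (σ 2)).1 *
        orient (z (σ 2)).2 (z (σ 3)).2 (z (σ 4)).2)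


/-- An isometry of the hyperbolic plane in the Poincaré disk model: the Möbius
transformation `z ↦ (a z + b)/(b̄ z + ā)` with `|a|² - |b|² = 1` (orientation
preserving when `pres = true`), precomposed with complex conjugation when
`pres = false` (orientation reversing). -/
structure DiskIsom where
  a : ℂ
  b : ℂ
  hnorm : Complex.normSq a - Complex.normSq b = 1
  pres : Bool

namespace DiskIsom

/-- The action on the (closed) disk and its boundary circle. -/
noncomputable def apply (g : DiskIsom) (z : ℂ) : ℂ :=
  (g.a * (if g.pres then z else (starRingEnd ℂ) z) + g.b) /
    ((starRingEnd ℂ) g.b * (if g.pres then z else (starRingEnd ℂ) z) + (starRingEnd ℂ) g.a)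

/-- The boundary action on the circle `S¹ = ∂ℍ²`. -/
noncomputable def applyS (g : DiskIsom) (x : Circle) : Circle :=
  Circle.exp (Complex.arg (g.apply (x : ℂ)))

/-- The orientation sign of an isometry. -/
noncomputable def sgn (g : DiskIsom) : ℝ := if g.pres then 1 else -1

/-- The inverse isometry. -/
noncomputable def inv (g : DiskIsom) : DiskIsom where
  a := if g.pres then (starRingEnd ℂ) g.a else g.a
  b := -g.b
  hnorm := by
    rcases g.pres with _ | _ <;>
      simp [Complex.normSq_conj, g.hnorm]
  pres := g.pres

end DiskIsom

/-- The geodesic of the hyperbolic plane (Poincaré disk model) with ideal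
endpoints `u, v ∈ S¹`, as a subset of the open unit disk in `ℂ`. -/
def geodesic (u v : Circle) : Set ℂ :=
  {z | ‖z‖ < 1 ∧
    (1 + Complex.normSq z) * ((u : ℂ) + (v : ℂ)) - 2 * z
      - 2 * (u : ℂ) * (v : ℂ) * (starRingEnd ℂ) z = 0}

/-- A cochain is alternating. -/
def Alternating {n : ℕ} {X : Type*} (f : (Fin n → X) → ℝ) : Prop :=
  ∀ (σ : Equiv.Perm (Fin n)) (z : Fin n → X),
    f (fun i => z (σ i)) = ((Equiv.Perm.sign σ : ℤ) : ℝ) * f z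

/-- Invariance of a cochain on `(S¹ × S¹)^n` under the twisted (orientation-sign)
action of `H = Isom(ℍ² × ℍ²)`, expressed on the generators: pairs of isometries of
`ℍ²` acting factorwise through their boundary action, and the factor swap. -/
def HInvariant {n : ℕ} (f : (Fin n → Circle × Circle) → ℝ) : Prop :=
  (∀ (g h : DiskIsom) (z : Fin n → Circle × Circle),
      f (fun i => (g.applyS (z i).1, h.applyS (z i).2)) = g.sgn * h.sgn * f z) ∧
  (∀ z : Fin n → Circle × Circle, f (fun i => ((z i).2, (z i).1)) = f z)

/-- The simplicial coboundary of a cochain. -/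
noncomputable def cobdry {n : ℕ} {X : Type*} (f : (Fin (n + 1) → X) → ℝ) :
    (Fin (n + 2) → X) → ℝ :=
  fun z => ∑ i : Fin (n + 2), (-1 : ℝ) ^ (i : ℕ) * f (fun j => z (i.succAbove j))

open Classical in
/-- Number of distinct first coordinates of a tuple in `S¹ × S¹`. -/
noncomputable def ncard₁ {n : ℕ} (z : Fin n → Circle × Circle) : ℕ :=
  (Finset.univ.image fun i => (z i).1).card

open Classical in
/-- Number of distinct second coordinates of a tuple in `S¹ × S¹`. -/
noncomputable def ncard₂ {n : ℕ} (z : Fin n → Circle × Circle) : ℕ :=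
  (Finset.univ.image fun i => (z i).2).card


section Aux

namespace DiskIsom

lemma abs_b_lt_abs_a (g : DiskIsom) : ‖g.b‖ < ‖g.a‖ := by
  have h := g.hnorm
  have h2 : ‖g.b‖ ^ 2 < ‖g.a‖ ^ 2 := by
    rw [Complex.sq_norm, Complex.sq_norm]; linarith
  exact lt_of_pow_lt_pow_left₀ 2 (norm_nonneg _) h2

lemma denom_ne_zero (g : DiskIsom) {w : ℂ} (hw : ‖w‖ = 1) :
    (starRingEnd ℂ) g.b * w + (starRingEnd ℂ) g.a ≠ 0 := by
  intro h
  have h1 : (starRingEnd ℂ) g.a = -((starRingEnd ℂ) g.b * w) := by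
    linear_combination h
  have h2 : ‖g.a‖ = ‖g.b‖ := by
    have := congrArg (‖·‖) h1
    simpa [hw] using this
  have := g.abs_b_lt_abs_a
  linarith

lemma abs_w (g : DiskIsom) (x : Circle) :
    ‖(if g.pres then (x : ℂ) else (starRingEnd ℂ) (x : ℂ))‖ = 1 := by
  rcases g.pres with _ | _ <;> simp [Circle.norm_coe]

lemma abs_apply (g : DiskIsom) (x : Circle) : ‖g.apply x‖ = 1 := by
  set w : ℂ := if g.pres then (x : ℂ) else (starRingEnd ℂ) (x : ℂ) with hwdef
  have hw : ‖w‖ = 1 := g.abs_w x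
  have hnum : Complex.normSq (g.a * w + g.b) =
      Complex.normSq ((starRingEnd ℂ) g.b * w + (starRingEnd ℂ) g.a) := by
    rw [Complex.normSq_add, Complex.normSq_add, Complex.normSq_mul, Complex.normSq_mul,
      Complex.normSq_conj, Complex.normSq_conj]
    have hw2 : Complex.normSq w = 1 := by rw [← Complex.sq_norm, hw]; norm_num
    rw [hw2, Complex.conj_conj,
      show g.a * w * (starRingEnd ℂ) g.b = (starRingEnd ℂ) g.b * w * g.a from by ring]
    ring
  have habs : ‖g.a * w + g.b‖ =
      ‖(starRingEnd ℂ) g.b * w + (starRingEnd ℂ) g.a‖ := by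
    rw [Complex.norm_def, Complex.norm_def, hnum]
  have hden := g.denom_ne_zero hw
  rw [apply, ← hwdef, norm_div, habs, div_self]
  exact norm_ne_zero_iff.2 hden

lemma coe_applyS (g : DiskIsom) (x : Circle) : (g.applyS x : ℂ) = g.apply x := by
  rw [applyS, Circle.coe_exp]
  have h := Complex.norm_mul_exp_arg_mul_I (g.apply x)
  rw [g.abs_apply x] at h
  simpa using h

lemma applyS_eq (g : DiskIsom) (x y : Circle) (h : g.apply (x : ℂ) = (y : ℂ)) :
    g.applyS x = y :=
  Circle.ext (by rw [coe_applyS, h])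

lemma applyS_eq' (g : DiskIsom) (x y : Circle)
    (h : g.a * (if g.pres then (x : ℂ) else (starRingEnd ℂ) (x : ℂ)) + g.b =
      (y : ℂ) * ((starRingEnd ℂ) g.b *
        (if g.pres then (x : ℂ) else (starRingEnd ℂ) (x : ℂ)) + (starRingEnd ℂ) g.a)) :
    g.applyS x = y := by
  apply applyS_eq
  rw [apply, div_eq_iff (g.denom_ne_zero (g.abs_w x))]
  exact h

/-- The identity isometry. -/
noncomputable def idIsom : DiskIsom := ⟨1, 0, by simp, true⟩

lemma idIsom_applyS (x : Circle) : idIsom.applyS x = x := by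
  apply applyS_eq'
  simp [idIsom]

lemma sgn_idIsom : idIsom.sgn = 1 := by simp [sgn, idIsom]

lemma sgn_of_pres_false {g : DiskIsom} (h : g.pres = false) : g.sgn = -1 := by
  simp [sgn, h]

lemma conj_coe (x : Circle) : (starRingEnd ℂ) (x : ℂ) = (x : ℂ)⁻¹ := by
  rw [← Circle.coe_inv_eq_conj, Circle.coe_inv]

/-- There is an orientation-reversing isometry fixing any two given boundary points. -/
lemma exists_fix2 (u v : Circle) :
    ∃ g : DiskIsom, g.pres = false ∧ g.applyS u = u ∧ g.applyS v = v := by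
  by_cases huv : (u : ℂ) = (v : ℂ)
  · refine ⟨⟨u, 0, by simp, false⟩, rfl, ?_, ?_⟩ <;>
    · apply applyS_eq'
      simp only [Bool.false_eq_true, if_false, conj_coe, map_zero, zero_mul, zero_add]
      · first
        | (rw [← huv]; field_simp; norm_num)
        | (field_simp; norm_num)
  · have hu : (u : ℂ) ≠ 0 := Circle.coe_ne_zero u
    have hv : (v : ℂ) ≠ 0 := Circle.coe_ne_zero v
    have huv' : (u : ℂ) - (v : ℂ) ≠ 0 := sub_ne_zero.2 huv
    have hvu' : (v : ℂ) - (u : ℂ) ≠ 0 := fun h => huv' (by linear_combination -h)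
    have hca : (starRingEnd ℂ) (-2 * (u : ℂ) * v / ((u : ℂ) - v)) = 2 / ((u : ℂ) - v) := by
      rw [map_div₀, map_mul, map_mul, map_neg, map_ofNat, conj_coe, conj_coe, map_sub,
        conj_coe, conj_coe, inv_sub_inv hu hv,
        show -2 * (u : ℂ)⁻¹ * (v : ℂ)⁻¹ = (-2) / ((u : ℂ) * v) by field_simp,
        div_div_div_cancel_right₀ (mul_ne_zero hu hv), div_eq_div_iff hvu' huv']
      ring
    have hcb : (starRingEnd ℂ) (((u : ℂ) + v) / ((u : ℂ) - v)) =
        -(((u : ℂ) + v) / ((u : ℂ) - v)) := by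
      rw [map_div₀, map_add, map_sub, conj_coe, conj_coe, inv_add_inv hu hv,
        inv_sub_inv hu hv, div_div_div_cancel_right₀ (mul_ne_zero hu hv),
        ← neg_div, div_eq_div_iff hvu' huv']
      ring
    refine ⟨⟨-2 * u * v / ((u : ℂ) - v), ((u : ℂ) + v) / ((u : ℂ) - v), ?_, false⟩,
      rfl, ?_, ?_⟩
    · rw [Complex.normSq_div, Complex.normSq_div]
      have h1 : Complex.normSq (-2 * (u : ℂ) * v) = 4 := by
        rw [Complex.normSq_mul, Complex.normSq_mul, Circle.normSq_coe, Circle.normSq_coe]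
        norm_num [Complex.normSq_apply]
      have h2 : Complex.normSq ((u : ℂ) + v) =
          2 + 2 * ((u : ℂ) * (starRingEnd ℂ) (v : ℂ)).re := by
        rw [Complex.normSq_add]; simp; norm_num
      have h3 : Complex.normSq ((u : ℂ) - v) =
          2 - 2 * ((u : ℂ) * (starRingEnd ℂ) (v : ℂ)).re := by
        rw [Complex.normSq_sub]; simp; norm_num
      have h4 : Complex.normSq ((u : ℂ) - v) ≠ 0 := by
        simpa [Complex.normSq_eq_zero] using huv'
      rw [h1, h2, h3]
      have h5 : (2 : ℝ) - 2 * ((u : ℂ) * (starRingEnd ℂ) (v : ℂ)).re ≠ 0 := by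
        rw [← h3]; exact h4
      rw [div_sub_div_same, div_eq_iff h5]
      ring
    · apply applyS_eq'
      simp only [Bool.false_eq_true, if_false]
      rw [hca, hcb, conj_coe]
      field_simp
      ring
    · apply applyS_eq'
      simp only [Bool.false_eq_true, if_false]
      rw [hca, hcb, conj_coe]
      field_simp
      ring

/-- For distinct boundary points there is an orientation-reversing isometry
fixing the first and swapping the other two. -/
lemma exists_swap3 (x0 x1 x2 : Circle) (h01 : (x0 : ℂ) ≠ x1) (h02 : (x0 : ℂ) ≠ x2) :
    ∃ g : DiskIsom, g.pres = false ∧ g.applyS x0 = x0 ∧ g.applyS x1 = x2 ∧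
      g.applyS x2 = x1 := by
  have hX0 : (x0 : ℂ) ≠ 0 := Circle.coe_ne_zero x0
  have hX1 : (x1 : ℂ) ≠ 0 := Circle.coe_ne_zero x1
  have hX2 : (x2 : ℂ) ≠ 0 := Circle.coe_ne_zero x2
  have hd1 : (x0 : ℂ) - x1 ≠ 0 := sub_ne_zero.2 h01
  have hd2 : (x0 : ℂ) - x2 ≠ 0 := sub_ne_zero.2 h02
  set A : ℂ := (x0 : ℂ) ^ 2 - x1 * x2 with hA
  set B : ℂ := 2 * (x0 : ℂ) * x1 * x2 - (x0 : ℂ) ^ 2 * ((x1 : ℂ) + x2) with hB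
  set C : ℂ := 2 * (x0 : ℂ) - x1 - x2 with hC
  set E : ℂ := ((x0 : ℂ) - x1) * ((x0 : ℂ) - x2) with hE
  set D : ℂ := (x0 : ℂ) ^ 2 * x1 * x2 with hD
  have hEne : E ≠ 0 := mul_ne_zero hd1 hd2
  have hDne : D ≠ 0 := by
    rw [hD]; exact mul_ne_zero (mul_ne_zero (pow_ne_zero 2 hX0) hX1) hX2
  have hm0 : (x0 : ℂ) * (x0 : ℂ)⁻¹ = 1 := mul_inv_cancel₀ hX0
  have hm1 : (x1 : ℂ) * (x1 : ℂ)⁻¹ = 1 := mul_inv_cancel₀ hX1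
  have hm2 : (x2 : ℂ) * (x2 : ℂ)⁻¹ = 1 := mul_inv_cancel₀ hX2
  have hcA : (starRingEnd ℂ) A = (-A) / D := by
    rw [hA, hD, eq_div_iff hDne]
    simp only [map_sub, map_mul, map_pow, map_add, map_ofNat, conj_coe]
    linear_combination ((x1 : ℂ) * x2 * ((x0 : ℂ) * (x0 : ℂ)⁻¹ + 1)) * hm0 -
      (x0 : ℂ) ^ 2 * x2 * (x2 : ℂ)⁻¹ * hm1 - (x0 : ℂ) ^ 2 * hm2
  have hcB : (starRingEnd ℂ) B = C / D := by
    rw [hB, hC, hD, eq_div_iff hDne]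
    simp only [map_sub, map_mul, map_pow, map_add, map_ofNat, conj_coe]
    linear_combination (2 * (x0 : ℂ) * ((x1 : ℂ) * (x1 : ℂ)⁻¹) * ((x2 : ℂ) * (x2 : ℂ)⁻¹) -
        (x2 : ℂ) * ((x1 : ℂ) * (x1 : ℂ)⁻¹) * ((x0 : ℂ) * (x0 : ℂ)⁻¹ + 1) -
        (x1 : ℂ) * ((x2 : ℂ) * (x2 : ℂ)⁻¹) * ((x0 : ℂ) * (x0 : ℂ)⁻¹ + 1)) * hm0 +
      (2 * (x0 : ℂ) * ((x2 : ℂ) * (x2 : ℂ)⁻¹) - x2) * hm1 + (2 * (x0 : ℂ) - x1) * hm2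
  have hcE : (starRingEnd ℂ) E = E / D := by
    rw [hE, hD, eq_div_iff hDne]
    simp only [map_sub, map_mul, map_pow, map_add, map_ofNat, conj_coe]
    linear_combination ((x1 : ℂ) * x2 * ((x0 : ℂ) * (x0 : ℂ)⁻¹ + 1) -
        (x0 : ℂ) * x1 * ((x2 : ℂ) * (x2 : ℂ)⁻¹) - (x0 : ℂ) * x2 * ((x1 : ℂ) * (x1 : ℂ)⁻¹)) * hm0 +
      ((x0 : ℂ) ^ 2 * ((x2 : ℂ) * (x2 : ℂ)⁻¹) - (x0 : ℂ) * x2) * hm1 +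
      ((x0 : ℂ) ^ 2 - (x0 : ℂ) * x1) * hm2
  have hcBE : (starRingEnd ℂ) (B / E) = C / E := by
    rw [map_div₀, hcB, hcE, div_div_div_cancel_right₀ hDne]
  have hcAE : (starRingEnd ℂ) (A / E) = (-A) / E := by
    rw [map_div₀, hcA, hcE, div_div_div_cancel_right₀ hDne]
  have hnorm : Complex.normSq (B / E) - Complex.normSq (A / E) = 1 := by
    have keypoly : B * C + A * A = E * E := by
      rw [hA, hB, hC, hE]; ring
    have key : B * (starRingEnd ℂ) B - A * (starRingEnd ℂ) A = E * (starRingEnd ℂ) E := by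
      rw [hcA, hcB, hcE]
      linear_combination (1 / D) * keypoly
    have key2 : Complex.normSq B - Complex.normSq A = Complex.normSq E := by
      have hcast : ((Complex.normSq B - Complex.normSq A : ℝ) : ℂ) =
          ((Complex.normSq E : ℝ) : ℂ) := by
        push_cast
        rw [← Complex.mul_conj B, ← Complex.mul_conj A, ← Complex.mul_conj E, key]
      exact_mod_cast hcast
    have hEnz : Complex.normSq E ≠ 0 := by simpa [Complex.normSq_eq_zero] using hEne
    rw [Complex.normSq_div, Complex.normSq_div, div_sub_div_same, div_eq_iff hEnz]
    linarith
  refine ⟨⟨B / E, A / E, hnorm, false⟩, rfl, ?_, ?_, ?_⟩ <;>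
  · apply applyS_eq'
    simp only [Bool.false_eq_true, if_false]
    rw [hcAE, hcBE, conj_coe, hA, hB, hC]
    field_simp
    ring

end DiskIsom
end Aux


/-- For `0 ≤ q ≤ 2`, every alternating `H`-invariant cochain on `(S¹ × S¹)^{q+1}`
is identically zero; in particular the twisted continuous bounded cohomology of
`H = Isom(ℍ² × ℍ²)` vanishes in degrees `≤ 2`. -/
theorem low_degree_cochains_vanish (q : ℕ) (hq : q ≤ 2)
    (f : (Fin (q + 1) → Circle × Circle) → ℝ)
    (halt : Alternating f) (hinv : HInvariant f)
    (z : Fin (q + 1) → Circle × Circle) : f z = 0 := by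
  have main1 : ∀ g : DiskIsom, g.pres = false →
      (∀ i, g.applyS (z i).1 = (z i).1) → f z = 0 := by
    intro g hp hfix
    have h1 := hinv.1 g DiskIsom.idIsom z
    have h2 : (fun i => (g.applyS (z i).1, DiskIsom.idIsom.applyS (z i).2)) = z := by
      funext i
      rw [hfix i, DiskIsom.idIsom_applyS]
    rw [h2, DiskIsom.sgn_of_pres_false hp, DiskIsom.sgn_idIsom] at h1
    linarith
  have main2 : ∀ g : DiskIsom, g.pres = false →
      (∀ i, g.applyS (z i).2 = (z i).2) → f z = 0 := by
    intro g hp hfix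
    have h1 := hinv.1 DiskIsom.idIsom g z
    have h2 : (fun i => (DiskIsom.idIsom.applyS (z i).1, g.applyS (z i).2)) = z := by
      funext i
      rw [hfix i, DiskIsom.idIsom_applyS]
    rw [h2, DiskIsom.sgn_of_pres_false hp, DiskIsom.sgn_idIsom] at h1
    linarith
  interval_cases q
  · obtain ⟨g, hp, hg, -⟩ := DiskIsom.exists_fix2 (z 0).1 (z 0).1
    refine main1 g hp ?_
    intro i
    have hi : i = 0 := Fin.ext (Nat.lt_one_iff.mp i.isLt)
    rw [hi]
    exact hg
  · obtain ⟨g, hp, hg0, hg1⟩ := DiskIsom.exists_fix2 (z 0).1 (z 1).1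
    refine main1 g hp ?_
    intro i
    fin_cases i
    · exact hg0
    · exact hg1
  · by_cases e01 : (z 0).1 = (z 1).1
    · obtain ⟨g, hp, hg0, hg2⟩ := DiskIsom.exists_fix2 (z 0).1 (z 2).1
      refine main1 g hp ?_
      intro i
      fin_cases i
      · exact hg0
      · show g.applyS (z 1).1 = (z 1).1
        rw [← e01]; exact hg0
      · exact hg2
    by_cases e02 : (z 0).1 = (z 2).1
    · obtain ⟨g, hp, hg0, hg1⟩ := DiskIsom.exists_fix2 (z 0).1 (z 1).1
      refine main1 g hp ?_
      intro i
      fin_cases i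
      · exact hg0
      · exact hg1
      · show g.applyS (z 2).1 = (z 2).1
        rw [← e02]; exact hg0
    by_cases f01 : (z 0).2 = (z 1).2
    · obtain ⟨g, hp, hg0, hg2⟩ := DiskIsom.exists_fix2 (z 0).2 (z 2).2
      refine main2 g hp ?_
      intro i
      fin_cases i
      · exact hg0
      · show g.applyS (z 1).2 = (z 1).2
        rw [← f01]; exact hg0
      · exact hg2
    by_cases f02 : (z 0).2 = (z 2).2
    · obtain ⟨g, hp, hg0, hg1⟩ := DiskIsom.exists_fix2 (z 0).2 (z 1).2
      refine main2 g hp ?_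
      intro i
      fin_cases i
      · exact hg0
      · exact hg1
      · show g.applyS (z 2).2 = (z 2).2
        rw [← f02]; exact hg0
    -- generic case: use the swap (1 2)
    obtain ⟨g, hpg, hg0, hg1, hg2⟩ := DiskIsom.exists_swap3 (z 0).1 (z 1).1 (z 2).1
      (fun h => e01 (Circle.ext h)) (fun h => e02 (Circle.ext h))
    obtain ⟨h, hph, hh0, hh1, hh2⟩ := DiskIsom.exists_swap3 (z 0).2 (z 1).2 (z 2).2
      (fun h => f01 (Circle.ext h)) (fun h => f02 (Circle.ext h))
    have h1 := hinv.1 g h z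
    have h2 : (fun i => (g.applyS (z i).1, h.applyS (z i).2)) =
        fun i => z (Equiv.swap (1 : Fin 3) 2 i) := by
      funext i
      fin_cases i
      · show (g.applyS (z 0).1, h.applyS (z 0).2) = z (Equiv.swap (1 : Fin 3) 2 0)
        rw [show (Equiv.swap (1 : Fin 3) 2) 0 = 0 by decide, hg0, hh0]
      · show (g.applyS (z 1).1, h.applyS (z 1).2) = z (Equiv.swap (1 : Fin 3) 2 1)
        rw [show (Equiv.swap (1 : Fin 3) 2) 1 = 2 by decide, hg1, hh1]
      · show (g.applyS (z 2).1, h.applyS (z 2).2) = z (Equiv.swap (1 : Fin 3) 2 2)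
        rw [show (Equiv.swap (1 : Fin 3) 2) 2 = 1 by decide, hg2, hh2]
    have h3 := halt (Equiv.swap (1 : Fin 3) 2) z
    rw [Equiv.Perm.sign_swap (by decide)] at h3
    have h3' : f (fun i => z (Equiv.swap (1 : Fin 3) 2 i)) = -f z := by
      rw [h3]; norm_num
    rw [h2, DiskIsom.sgn_of_pres_false hpg, DiskIsom.sgn_of_pres_false hph] at h1
    rw [h3'] at h1
    linarith
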